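/- Let t_min = −(3/2)·∫₀¹ x^{3/2}(2 − x³)^{−5/2} dx (a finite negative real number). There exists a differentiable, strictly increasing function u : (t_min, +∞) → ℝ with u(0) = 1, 0 < u(t) < 2^{1/3} for all t, satisfying u'(t) = (2/3)·(2 − u(t)³)^{5/2}·u(t)^{−3/2} for all t ∈ (t_min, +∞), and such that lim_{t → t_min⁺} u(t) = 0 and lim_{t → +∞} u(t) = 2^{1/3}; in particular u is a bijection from (t_min, +∞) onto (0, 2^{1/3}). -/

import Mathlib

open MeasureTheory Filter Set
open Topology

/-- t_min = −(3/2)·∫₀¹ x^{3/2}(2 − x³)^{−5/2} dx. -/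
noncomputable def tmin : ℝ :=
  -(3 / 2 : ℝ) * ∫ x in Set.Ioo (0 : ℝ) 1, x ^ ((3 : ℝ) / 2) * (2 - x ^ 3) ^ (-(5 : ℝ) / 2)

namespace ODEAux

noncomputable def c : ℝ := (2:ℝ) ^ ((1:ℝ)/3)
noncomputable def g : ℝ → ℝ := fun x => x ^ ((3:ℝ)/2) * (2 - x ^ 3) ^ (-(5:ℝ)/2)
noncomputable def T : ℝ → ℝ := fun y => (3/2) * ∫ x in (1:ℝ)..y, g x

lemma one_lt_c : 1 < c :=
  (Real.one_lt_rpow_iff_of_pos two_pos).2 (Or.inl ⟨one_lt_two, by norm_num⟩)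

lemma c_pos : 0 < c := lt_trans one_pos one_lt_c

lemma c_lt_two : c < 2 := by
  have := Real.rpow_lt_rpow_of_exponent_lt (x := 2) one_lt_two
    (show (1:ℝ)/3 < 1 by norm_num)
  rwa [Real.rpow_one] at this

lemma c_cube : c ^ 3 = 2 := by
  rw [c, ← Real.rpow_natCast ((2:ℝ) ^ ((1:ℝ)/3)) 3, ← Real.rpow_mul (by norm_num : (0:ℝ) ≤ 2)]
  norm_num

lemma two_sub_pos {x : ℝ} (hx0 : 0 ≤ x) (hxc : x < c) : 0 < 2 - x ^ 3 := by
  have : x ^ 3 < c ^ 3 := pow_lt_pow_left₀ hxc hx0 (by norm_num)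
  rw [c_cube] at this; linarith

lemma hg_contAt {x : ℝ} (hx0 : 0 ≤ x) (hxc : x < c) : ContinuousAt g x := by
  have h1 : ContinuousAt (fun y : ℝ => y ^ ((3:ℝ)/2)) x :=
    Real.continuousAt_rpow_const x _ (Or.inr (by norm_num))
  have h2 : ContinuousAt (fun y : ℝ => (2 - y ^ 3) ^ (-(5:ℝ)/2)) x :=
    ((continuous_const.sub (continuous_pow 3)).continuousAt).rpow_const
      (Or.inl (ne_of_gt (two_sub_pos hx0 hxc)))
  exact h1.mul h2

lemma hg_cont : ContinuousOn g (Ico 0 c) := fun x hx =>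
  (hg_contAt hx.1 hx.2).continuousWithinAt

lemma hg_pos {x : ℝ} (hx0 : 0 < x) (hxc : x < c) : 0 < g x :=
  mul_pos (Real.rpow_pos_of_pos hx0 _) (Real.rpow_pos_of_pos (two_sub_pos hx0.le hxc) _)

lemma hg_int {a b : ℝ} (ha : a ∈ Ico (0:ℝ) c) (hb : b ∈ Ico (0:ℝ) c) :
    IntervalIntegrable g volume a b := by
  have hsub : uIcc a b ⊆ Ico 0 c := (ordConnected_Ico).uIcc_subset ha hb
  exact (hg_cont.mono hsub).intervalIntegrable

lemma one_mem : (1:ℝ) ∈ Ico (0:ℝ) c := ⟨zero_le_one, one_lt_c⟩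

lemma hT_deriv {y : ℝ} (hy : y ∈ Ioo (0:ℝ) c) : HasDerivAt T ((3/2) * g y) y := by
  have h1 : IntervalIntegrable g volume 1 y := hg_int one_mem ⟨hy.1.le, hy.2⟩
  have h2 : StronglyMeasurableAtFilter g (𝓝 y) :=
    (hg_cont.mono Ioo_subset_Ico_self).stronglyMeasurableAtFilter isOpen_Ioo y hy
  exact (intervalIntegral.integral_hasDerivAt_right h1 h2 (hg_contAt hy.1.le hy.2)).const_mul _

lemma hT1 : T 1 = 0 := by simp [T]

lemma hT0 : T 0 = tmin := by
  rw [T, intervalIntegral.integral_symm, intervalIntegral.integral_of_le zero_le_one,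
    integral_Ioc_eq_integral_Ioo, tmin]
  simp only [g]
  ring

lemma hTcont01 : ContinuousOn T (Icc 0 1) := by
  have hsub : Icc (0:ℝ) 1 ⊆ Ico 0 c := Icc_subset_Ico_right one_lt_c
  have hint : IntegrableOn g (uIcc (1:ℝ) 0) volume := by
    rw [uIcc_comm, uIcc_of_le zero_le_one]
    exact (hg_cont.mono hsub).integrableOn_compact isCompact_Icc
  have := intervalIntegral.continuousOn_primitive_interval (a := 1) (b := 0) (f := g) hint
  rw [uIcc_comm, uIcc_of_le zero_le_one] at this
  exact this.const_smul (3/2 : ℝ)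


lemma hTcont : ContinuousOn T (Ico 0 c) := by
  intro x hx
  rcases eq_or_lt_of_le hx.1 with h0 | h0
  · subst h0
    have := hTcont01 0 ⟨le_refl 0, zero_le_one⟩
    refine this.mono_of_mem_nhdsWithin ?_
    have hss : Ico (0:ℝ) c ∩ Iio 1 ⊆ Icc 0 1 := fun z hz => ⟨hz.1.1, hz.2.le⟩
    exact mem_nhdsWithin.2 ⟨Iio 1, isOpen_Iio, mem_Iio.2 zero_lt_one,
      by rw [inter_comm]; exact hss⟩
  · exact (hT_deriv ⟨h0, hx.2⟩).continuousAt.continuousWithinAt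

lemma hTmono : StrictMonoOn T (Ico 0 c) := by
  apply strictMonoOn_of_deriv_pos (convex_Ico 0 c) hTcont
  intro x hx
  rw [interior_Ico] at hx
  rw [(hT_deriv hx).deriv]
  exact mul_pos (by norm_num) (hg_pos hx.1 hx.2)

lemma tmin_neg : tmin < 0 := by
  have := hTmono ⟨le_refl 0, c_pos⟩ one_mem one_pos
  rwa [hT0, hT1] at this

lemma hT_gt {y : ℝ} (hy : y ∈ Ioo (0:ℝ) c) : tmin < T y := by
  have := hTmono ⟨le_refl 0, c_pos⟩ (Ioo_subset_Ico_self hy) hy.1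
  rwa [hT0] at this

lemma K_pos : (0:ℝ) < (3 * c ^ 2) ^ (-(5:ℝ)/2) :=
  Real.rpow_pos_of_pos (mul_pos (by norm_num) (pow_pos c_pos 2)) _

lemma g_lower {x : ℝ} (hx1 : 1 ≤ x) (hxc : x < c) :
    (3 * c ^ 2) ^ (-(5:ℝ)/2) * (c - x)⁻¹ ≤ g x := by
  have hx0 : (0:ℝ) ≤ x := le_trans zero_le_one hx1
  have hcx : 0 < c - x := sub_pos.2 hxc
  have hcx1 : c - x ≤ 1 := by have := one_lt_c; have := c_lt_two; linarith
  have h2 : 0 < 2 - x ^ 3 := two_sub_pos hx0 hxc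
  -- 2 - x^3 ≤ (c - x) * (3 * c^2)
  have hfac : 2 - x ^ 3 ≤ (c - x) * (3 * c ^ 2) := by
    have hc2 : c ^ 3 = 2 := c_cube
    nlinarith [mul_nonneg hcx.le (sq_nonneg (c - x)), mul_nonneg hcx.le (mul_nonneg (le_trans zero_le_one hx1) (sub_pos.2 hxc).le), sq_nonneg x, c_pos.le, mul_nonneg hcx.le (mul_nonneg c_pos.le hx0)]
  have step1 : (2 - x ^ 3) ^ (-(5:ℝ)/2) ≥ ((c - x) * (3 * c ^ 2)) ^ (-(5:ℝ)/2) :=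
    Real.rpow_le_rpow_of_nonpos h2 hfac (by norm_num)
  have step2 : ((c - x) * (3 * c ^ 2)) ^ (-(5:ℝ)/2)
      = (c - x) ^ (-(5:ℝ)/2) * (3 * c ^ 2) ^ (-(5:ℝ)/2) :=
    Real.mul_rpow hcx.le (by positivity)
  have step3 : (c - x) ^ (-(1:ℝ)) ≤ (c - x) ^ (-(5:ℝ)/2) :=
    Real.rpow_le_rpow_of_exponent_ge hcx hcx1 (by norm_num)
  have step4 : (c - x)⁻¹ = (c - x) ^ (-(1:ℝ)) := (Real.rpow_neg_one _).symm
  have hxpow : 1 ≤ x ^ ((3:ℝ)/2) :=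
    Real.one_le_rpow hx1 (by norm_num)
  calc (3 * c ^ 2) ^ (-(5:ℝ)/2) * (c - x)⁻¹
      ≤ (3 * c ^ 2) ^ (-(5:ℝ)/2) * (c - x) ^ (-(5:ℝ)/2) := by
        rw [step4]; exact mul_le_mul_of_nonneg_left step3 K_pos.le
    _ = ((c - x) * (3 * c ^ 2)) ^ (-(5:ℝ)/2) := by rw [step2]; ring
    _ ≤ (2 - x ^ 3) ^ (-(5:ℝ)/2) := step1
    _ = 1 * (2 - x ^ 3) ^ (-(5:ℝ)/2) := (one_mul _).symm
    _ ≤ x ^ ((3:ℝ)/2) * (2 - x ^ 3) ^ (-(5:ℝ)/2) :=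
        mul_le_mul_of_nonneg_right hxpow (Real.rpow_nonneg h2.le _)

lemma log_integral {y : ℝ} (h1y : 1 ≤ y) (hyc : y < c) :
    ∫ x in (1:ℝ)..y, (3 * c ^ 2) ^ (-(5:ℝ)/2) * (c - x)⁻¹
      = (3 * c ^ 2) ^ (-(5:ℝ)/2) * (Real.log (c - 1) - Real.log (c - y)) := by
  set K := (3 * c ^ 2) ^ (-(5:ℝ)/2) with hK
  have hder : ∀ x ∈ uIcc (1:ℝ) y,
      HasDerivAt (fun z => -K * Real.log (c - z)) (K * (c - x)⁻¹) x := by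
    intro x hx
    rw [uIcc_of_le h1y] at hx
    have hcx : c - x ≠ 0 := ne_of_gt (by have := hx.2; linarith [hyc])
    have h1 : HasDerivAt (fun z : ℝ => c - z) (-1) x := by
      simpa using (hasDerivAt_id x).const_sub c
    have h2 : HasDerivAt (fun z : ℝ => Real.log (c - z)) ((c - x)⁻¹ * (-1)) x :=
      (Real.hasDerivAt_log hcx).comp x h1
    have := h2.const_mul (-K)
    rw [show K * (c - x)⁻¹ = -K * ((c - x)⁻¹ * -1) by ring]
    exact this
  have hint : IntervalIntegrable (fun x => K * (c - x)⁻¹) volume 1 y := by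
    apply ContinuousOn.intervalIntegrable
    intro x hx
    rw [uIcc_of_le h1y] at hx
    have hcx : c - x ≠ 0 := ne_of_gt (by have := hx.2; linarith [hyc])
    exact (continuousAt_const.mul (((continuous_const.sub continuous_id).continuousAt).inv₀ hcx)).continuousWithinAt
  rw [intervalIntegral.integral_eq_sub_of_hasDerivAt hder hint]
  ring

lemma T_lower {y : ℝ} (h1y : 1 ≤ y) (hyc : y < c) :
    (3/2) * ((3 * c ^ 2) ^ (-(5:ℝ)/2) * (Real.log (c - 1) - Real.log (c - y))) ≤ T y := by
  have hmono := intervalIntegral.integral_mono_on (μ := volume) h1y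
    (by
      apply ContinuousOn.intervalIntegrable
      rw [uIcc_of_le h1y]
      intro x hx
      have hcx : c - x ≠ 0 := ne_of_gt (by have := hx.2; linarith [hyc])
      exact (continuousAt_const.mul (((continuous_const.sub continuous_id).continuousAt).inv₀ hcx)).continuousWithinAt)
    (hg_int one_mem ⟨le_trans zero_le_one h1y, hyc⟩)
    (fun x hx => g_lower hx.1 (lt_of_le_of_lt hx.2 hyc))
  rw [log_integral h1y hyc] at hmono
  have : (3/2 : ℝ) * ((3 * c ^ 2) ^ (-(5:ℝ)/2) * (Real.log (c - 1) - Real.log (c - y)))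
      ≤ (3/2) * ∫ x in (1:ℝ)..y, g x := by
    apply mul_le_mul_of_nonneg_left hmono (by norm_num)
  exact this

lemma hT_top : Tendsto T (𝓝[<] c) atTop := by
  have hlog : Tendsto (fun y => Real.log (c - y)) (𝓝[<] c) atBot := by
    apply Real.tendsto_log_nhdsGT_zero.comp
    apply tendsto_nhdsWithin_of_tendsto_nhds_of_eventually_within
    · have : Tendsto (fun y : ℝ => c - y) (𝓝 c) (𝓝 (c - c)) :=
        (continuous_const.sub continuous_id).tendsto c
      simpa using this.mono_left nhdsWithin_le_nhds
    · filter_upwards [self_mem_nhdsWithin] with y hy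
      exact mem_Ioi.2 (sub_pos.2 hy)
  have h1 : Tendsto (fun y => (3/2) * ((3 * c ^ 2) ^ (-(5:ℝ)/2)
      * (Real.log (c - 1) - Real.log (c - y)))) (𝓝[<] c) atTop := by
    apply Tendsto.const_mul_atTop (by norm_num : (0:ℝ) < 3/2)
    apply Tendsto.const_mul_atTop K_pos
    apply tendsto_atTop_add_const_left
    exact (tendsto_neg_atBot_atTop).comp hlog
  apply tendsto_atTop_mono' _ _ h1
  filter_upwards [Ioo_mem_nhdsLT_of_mem (⟨one_lt_c, le_refl c⟩ : c ∈ Ioc 1 c)] with y hy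
  exact T_lower hy.1.le hy.2
lemma key_surj {t : ℝ} (ht : tmin < t) : ∃ y ∈ Ioo (0:ℝ) c, T y = t := by
  have hne : (𝓝[Set.Ioo (0:ℝ) 1] (0:ℝ)).NeBot := by
    rw [nhdsWithin_Ioo_eq_nhdsGT zero_lt_one]
    infer_instance
  have htend : Tendsto T (𝓝[Set.Ioo (0:ℝ) 1] 0) (𝓝 tmin) := by
    have h0 : ContinuousWithinAt T (Icc 0 1) 0 := hTcont01 0 ⟨le_refl 0, zero_le_one⟩
    rw [ContinuousWithinAt, hT0] at h0
    exact h0.mono_left (nhdsWithin_mono _ Ioo_subset_Icc_self)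
  obtain ⟨y₀, hTy₀, hy₀⟩ :=
    ((htend.eventually_lt_const ht).and self_mem_nhdsWithin).exists
  have hne2 : (𝓝[<] c).NeBot := by infer_instance
  obtain ⟨y₁, hTy₁, hy₁⟩ :=
    ((hT_top.eventually_gt_atTop t).and
      (Ioo_mem_nhdsLT_of_mem (⟨one_lt_c, le_refl c⟩ : c ∈ Ioc 1 c))).exists
  have hy01 : y₀ ≤ y₁ := le_of_lt (lt_trans hy₀.2 hy₁.1)
  have hsub : Icc y₀ y₁ ⊆ Ico 0 c := fun z hz => ⟨le_trans hy₀.1.le hz.1, lt_of_le_of_lt hz.2 hy₁.2⟩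
  have hivt := intermediate_value_Icc hy01 (hTcont.mono hsub)
  have htm : t ∈ Icc (T y₀) (T y₁) := ⟨hTy₀.le, hTy₁.le⟩
  obtain ⟨y, hy, hTy⟩ := hivt htm
  exact ⟨y, ⟨lt_of_lt_of_le hy₀.1 hy.1, lt_of_le_of_lt hy.2 hy₁.2⟩, hTy⟩

lemma lem_lt {a t : ℝ} {u : ℝ → ℝ} (hu : ∀ s ∈ Ioi tmin, u s ∈ Ioo (0:ℝ) c ∧ T (u s) = s)
    (ha : a ∈ Ico (0:ℝ) c) (ht : t ∈ Ioi tmin) (h : T a < t) : a < u t := by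
  by_contra hle
  push_neg at hle
  have := hTmono.monotoneOn (Ioo_subset_Ico_self (hu t ht).1) ha hle
  rw [(hu t ht).2] at this
  exact absurd h (not_lt.2 this)

lemma lem_gt {a t : ℝ} {u : ℝ → ℝ} (hu : ∀ s ∈ Ioi tmin, u s ∈ Ioo (0:ℝ) c ∧ T (u s) = s)
    (ha : a ∈ Ico (0:ℝ) c) (ht : t ∈ Ioi tmin) (h : t < T a) : u t < a := by
  by_contra hle
  push_neg at hle
  have := hTmono.monotoneOn ha (Ioo_subset_Ico_self (hu t ht).1) hle
  rw [(hu t ht).2] at this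
  exact absurd h (not_lt.2 this)
end ODEAux

open ODEAux

/-- There exists a differentiable, strictly increasing
u : (t_min, ∞) → ℝ with u(0) = 1, 0 < u < 2^{1/3}, solving
u' = (2/3)(2−u³)^{5/2} u^{−3/2}, with u(t) → 0 as t → t_min⁺ and
u(t) → 2^{1/3} as t → +∞; in particular u is a bijection from (t_min, ∞)
onto (0, 2^{1/3}). -/
theorem exists_maximal_solution_u :
    ∃ u : ℝ → ℝ,
      u 0 = 1 ∧
      StrictMonoOn u (Ioi tmin) ∧
      (∀ t ∈ Ioi tmin, 0 < u t ∧ u t < (2 : ℝ) ^ ((1 : ℝ) / 3)) ∧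
      (∀ t ∈ Ioi tmin,
        HasDerivAt u ((2 / 3) * (2 - u t ^ 3) ^ ((5 : ℝ) / 2) * u t ^ (-(3 : ℝ) / 2)) t) ∧
      Tendsto u (nhdsWithin tmin (Ioi tmin)) (nhds 0) ∧
      Tendsto u atTop (nhds ((2 : ℝ) ^ ((1 : ℝ) / 3))) ∧
      Set.BijOn u (Ioi tmin) (Ioo 0 ((2 : ℝ) ^ ((1 : ℝ) / 3))) := by
  have hcdef : (2 : ℝ) ^ ((1 : ℝ) / 3) = c := rfl
  have hex : ∀ t : ℝ, ∃ y : ℝ, tmin < t → y ∈ Ioo (0:ℝ) c ∧ T y = t := by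
    intro t
    by_cases h : tmin < t
    · obtain ⟨y, hy, hTy⟩ := key_surj h
      exact ⟨y, fun _ => ⟨hy, hTy⟩⟩
    · exact ⟨1, fun h' => absurd h' h⟩
  choose u hu' using hex
  have hu : ∀ s ∈ Ioi tmin, u s ∈ Ioo (0:ℝ) c ∧ T (u s) = s := fun s hs => hu' s hs
  refine ⟨u, ?_, ?_, ?_, ?_, ?_, ?_, ?_⟩
  · -- u 0 = 1
    have h0 : (0:ℝ) ∈ Ioi tmin := tmin_neg
    have h01 : T (u 0) = T 1 := by rw [(hu 0 h0).2, hT1]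
    exact hTmono.injOn (Ioo_subset_Ico_self (hu 0 h0).1) one_mem h01
  · -- StrictMonoOn
    intro s hs t ht hst
    by_contra hle
    push_neg at hle
    have := hTmono.monotoneOn (Ioo_subset_Ico_self (hu t ht).1)
      (Ioo_subset_Ico_self (hu s hs).1) hle
    rw [(hu t ht).2, (hu s hs).2] at this
    exact absurd hst (not_lt.2 this)
  · -- bounds
    intro t ht
    rw [hcdef]
    exact ⟨(hu t ht).1.1, (hu t ht).1.2⟩
  · -- derivative
    intro t ht
    have hyt := (hu t ht).1
    have hy : 0 < u t := hyt.1
    have h2 : 0 < 2 - u t ^ 3 := two_sub_pos hy.le hyt.2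
    have hcontu : ContinuousAt u t := by
      rw [ContinuousAt]
      apply (tendsto_order).2
      constructor
      · intro b hb
        rcases le_or_gt b 0 with hb0 | hb0
        · filter_upwards [isOpen_Ioi.mem_nhds ht] with z hz
          exact lt_of_le_of_lt hb0 (hu z hz).1.1
        · have hbm : b ∈ Ico (0:ℝ) c := ⟨hb0.le, lt_trans hb hyt.2⟩
          have hTb : T b < t := by
            have := hTmono hbm (Ioo_subset_Ico_self hyt) hb
            rwa [(hu t ht).2] at this
          filter_upwards [isOpen_Ioi.mem_nhds ht,
            isOpen_Ioi.mem_nhds (show t ∈ Ioi (T b) from hTb)] with z hz hz2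
          exact lem_lt hu hbm hz hz2
      · intro b hb
        rcases le_or_gt c b with hbc | hbc
        · filter_upwards [isOpen_Ioi.mem_nhds ht] with z hz
          exact lt_of_lt_of_le (hu z hz).1.2 hbc
        · have hbm : b ∈ Ico (0:ℝ) c := ⟨(lt_trans hy hb).le, hbc⟩
          have hTb : t < T b := by
            have := hTmono (Ioo_subset_Ico_self hyt) hbm hb
            rwa [(hu t ht).2] at this
          filter_upwards [isOpen_Ioi.mem_nhds ht,
            isOpen_Iio.mem_nhds (show t ∈ Iio (T b) from hTb)] with z hz hz2
          exact lem_gt hu hbm hz hz2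
    have hTd : HasDerivAt T ((3/2) * g (u t)) (u t) := hT_deriv hyt
    have hne : (3/2) * g (u t) ≠ 0 := ne_of_gt (mul_pos (by norm_num) (hg_pos hy hyt.2))
    have hfg : ∀ᶠ z in 𝓝 t, T (u z) = z := by
      filter_upwards [isOpen_Ioi.mem_nhds ht] with z hz
      exact (hu z hz).2
    have hder := HasDerivAt.of_local_left_inverse hcontu hTd hne hfg
    have heq : ((3/2) * g (u t))⁻¹
        = (2 / 3) * (2 - u t ^ 3) ^ ((5 : ℝ) / 2) * u t ^ (-(3 : ℝ) / 2) := by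
      have e1 : u t ^ (-(3:ℝ)/2) = (u t ^ ((3:ℝ)/2))⁻¹ := by
        rw [neg_div, Real.rpow_neg hy.le]
      have e2 : (2 - u t ^ 3) ^ (-(5:ℝ)/2) = ((2 - u t ^ 3) ^ ((5:ℝ)/2))⁻¹ := by
        rw [neg_div, Real.rpow_neg h2.le]
      have hgy : g (u t) = u t ^ ((3:ℝ)/2) * ((2 - u t ^ 3) ^ ((5:ℝ)/2))⁻¹ := by
        rw [g, ← e2]
      rw [hgy, e1, mul_inv, mul_inv, inv_inv]
      have h3 : (u t ^ ((3:ℝ)/2)) ≠ 0 := ne_of_gt (Real.rpow_pos_of_pos hy _)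
      field_simp
    rw [heq] at hder
    exact hder
  · -- tendsto at tmin
    apply (tendsto_order).2
    constructor
    · intro b hb
      filter_upwards [self_mem_nhdsWithin] with z hz
      exact lt_trans hb (hu z hz).1.1
    · intro b hb
      set y : ℝ := min b 1 / 2 with hy
      have hy0 : 0 < y := by positivity
      have hyb : y < b := by
        rcases le_or_gt b 1 with h | h
        · rw [hy, min_eq_left h]; linarith
        · rw [hy, min_eq_right h.le]; linarith
      have hyc : y < c := by
        have : y ≤ 1/2 := by rw [hy]; have := min_le_right b 1; linarith
        linarith [one_lt_c]
      have hmem : y ∈ Ioo (0:ℝ) c := ⟨hy0, hyc⟩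
      have hTy : tmin < T y := hT_gt hmem
      filter_upwards [Ioo_mem_nhdsGT_of_mem (⟨le_refl tmin, hTy⟩ : tmin ∈ Ico tmin (T y))]
        with z hz
      exact lt_trans (lem_gt hu (Ioo_subset_Ico_self hmem) hz.1 hz.2) hyb
  · -- tendsto atTop
    rw [hcdef]
    apply (tendsto_order).2
    constructor
    · intro b hb
      rcases le_or_gt b 0 with hb0 | hb0
      · filter_upwards [eventually_gt_atTop tmin] with z hz
        exact lt_of_le_of_lt hb0 (hu z hz).1.1
      · have hbm : b ∈ Ico (0:ℝ) c := ⟨hb0.le, hb⟩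
        filter_upwards [eventually_gt_atTop (max tmin (T b))] with z hz
        have hz1 : tmin < z := lt_of_le_of_lt (le_max_left _ _) hz
        have hz2 : T b < z := lt_of_le_of_lt (le_max_right _ _) hz
        exact lem_lt hu hbm hz1 hz2
    · intro b hb
      filter_upwards [eventually_gt_atTop tmin] with z hz
      exact lt_trans (hu z hz).1.2 hb
  · -- BijOn
    rw [hcdef]
    refine ⟨fun t ht => (hu t ht).1, ?_, ?_⟩
    · intro s hs t ht hst
      have : T (u s) = T (u t) := by rw [hst]
      rw [(hu s hs).2, (hu t ht).2] at this
      exact this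
    · intro y hy
      have hTy : T y ∈ Ioi tmin := hT_gt hy
      refine ⟨T y, hTy, ?_⟩
      have := (hu (T y) hTy).2
      exact hTmono.injOn (Ioo_subset_Ico_self (hu (T y) hTy).1) (Ioo_subset_Ico_self hy) this
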